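/- The function Φ is concave on the interval (p̲, ∞); moreover, if ν is not the zero measure, then Φ is strictly increasing on (p̲, ∞). -/

import Mathlib

open MeasureTheory Real Set Filter

noncomputable section

/-- Real power with the convention `0 ^ r = 0` for every exponent `r`. -/
def pw (x r : ℝ) : ℝ := if x = 0 then 0 else x ^ r

/-- The state space `S` of ranked mass configurations: nonincreasing nonnegative
sequences with total sum at most `1` (sum condition stated via partial sums). -/
def inS (s : ℕ → ℝ) : Prop :=
  (∀ i, 0 ≤ s i) ∧ (∀ i, s (i + 1) ≤ s i) ∧ ∀ F : Finset ℕ, ∑ i ∈ F, s i ≤ 1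

/-- The configuration `(1, 0, 0, …)`. -/
def oneConf : ℕ → ℝ := fun i => if i = 0 then 1 else 0

/-- A dislocation measure: a measure on sequences, carried by `S`, giving no mass
to `(1,0,…)`, integrating `1 - s₁`, and conserving total mass (carried by
configurations with `Σ sᵢ = 1`). -/
structure IsDislocation (ν : Measure (ℕ → ℝ)) : Prop where
  carried : ν {s | ¬ (inS s ∧ HasSum s 1)} = 0
  no_one : ν {oneConf} = 0
  int_one_sub : ∫⁻ s, ENNReal.ofReal (1 - s 0) ∂ν < ⊤

/-- `p̲ := inf {p ∈ ℝ : ∫_S Σ_{i≥2} sᵢ^{p+1} ν(ds) < ∞}`, as an extended real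
(possibly `-∞`, and `+∞` if no `p` qualifies). -/
def pLow (ν : Measure (ℕ → ℝ)) : EReal :=
  sInf {x : EReal | ∃ p : ℝ, x = (p : EReal) ∧
    ∫⁻ s, ∑' i, ENNReal.ofReal (pw (s (i + 1)) (p + 1)) ∂ν < ⊤}

/-- `Φ(q) := ∫_S (1 - Σ_{i≥1} sᵢ^{q+1}) ν(ds)`. -/
def Phi (ν : Measure (ℕ → ℝ)) (q : ℝ) : ℝ :=
  ∫ s, (1 - ∑' i, pw (s i) (q + 1)) ∂ν

open scoped ENNReal NNReal

namespace PhiAux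

lemma pw_nonneg {x : ℝ} (hx : 0 ≤ x) (r : ℝ) : 0 ≤ pw x r := by
  unfold pw
  split
  · exact le_refl 0
  · exact (Real.rpow_pos_of_pos (lt_of_le_of_ne hx (Ne.symm ‹_›)) r).le

lemma pw_of_pos {x : ℝ} (hx : 0 < x) (r : ℝ) : pw x r = x ^ r := by
  unfold pw; rw [if_neg hx.ne']

lemma pw_mono_exp {x r₁ r₂ : ℝ} (hx0 : 0 ≤ x) (hx1 : x ≤ 1) (h : r₁ ≤ r₂) :
    pw x r₂ ≤ pw x r₁ := by
  rcases eq_or_lt_of_le hx0 with hx | hx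
  · simp [pw, ← hx]
  · rw [pw_of_pos hx, pw_of_pos hx]
    exact Real.rpow_le_rpow_of_exponent_ge hx hx1 h

lemma pw_strict {x r₁ r₂ : ℝ} (hx0 : 0 < x) (hx1 : x < 1) (h : r₁ < r₂) :
    pw x r₂ < pw x r₁ := by
  rw [pw_of_pos hx0, pw_of_pos hx0]
  exact Real.rpow_lt_rpow_of_exponent_gt hx0 hx1 h

lemma measurable_rpow_const (r : ℝ) : Measurable fun x : ℝ => x ^ r := by
  have h : (fun x : ℝ => x ^ r)
      = fun x => if x = 0 then (if r = 0 then 1 else 0)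
          else Real.exp (Real.log x * r) * (if x < 0 then Real.cos (r * Real.pi) else 1) := by
    funext x
    rcases lt_trichotomy x 0 with hx | hx | hx
    · rw [if_neg hx.ne, if_pos hx, Real.rpow_def_of_neg hx]
    · subst hx
      rcases eq_or_ne r 0 with hr | hr
      · simp [hr]
      · simp [Real.zero_rpow hr, hr]
    · rw [if_neg hx.ne', if_neg (not_lt.2 hx.le), mul_one, Real.rpow_def_of_pos hx]
  rw [h]
  exact Measurable.ite measurableSet_eq measurable_const
    (((Real.measurable_log.mul_const r).exp).mul
      (Measurable.ite (measurableSet_lt measurable_id measurable_const)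
        measurable_const measurable_const))

lemma measurable_pw (r : ℝ) : Measurable fun x : ℝ => pw x r :=
  Measurable.ite measurableSet_eq measurable_const (measurable_rpow_const r)

structure Good (s : ℕ → ℝ) : Prop where
  nonneg : ∀ i, 0 ≤ s i
  anti : ∀ i, s (i + 1) ≤ s i
  psum : ∀ F : Finset ℕ, ∑ i ∈ F, s i ≤ 1
  hsum : HasSum s 1
  pos1 : 0 < s 1

namespace Good

variable {s : ℕ → ℝ}

lemma le_one (g : Good s) (i : ℕ) : s i ≤ 1 := by simpa using g.psum {i}

lemma pos0 (g : Good s) : 0 < s 0 := lt_of_lt_of_le g.pos1 (g.anti 0)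

lemma lt_one1 (g : Good s) : s 1 < 1 := by
  have h2 : s 0 + s 1 ≤ 1 := by
    have := g.psum {0, 1}
    simpa [Finset.sum_pair (by norm_num : (0:ℕ) ≠ 1)] using this
  have := g.anti 0
  linarith [g.pos1]

end Good

lemma ae_good {ν : Measure (ℕ → ℝ)} (hν : IsDislocation ν) : ∀ᵐ s ∂ν, Good s := by
  have h1 : ∀ᵐ s ∂ν, inS s ∧ HasSum s 1 := by
    rw [ae_iff]; exact hν.carried
  have h2 : ∀ᵐ s ∂ν, s ≠ oneConf := by
    rw [ae_iff]
    have : {a : ℕ → ℝ | ¬ a ≠ oneConf} = {oneConf} := by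
      ext a; simp [Set.mem_singleton_iff]
    rw [this]; exact hν.no_one
  filter_upwards [h1, h2] with s hs hne
  obtain ⟨⟨h0, ha, hp⟩, hsum⟩ := hs
  refine ⟨h0, ha, hp, hsum, ?_⟩
  by_contra hs1
  push_neg at hs1
  have hs1' : s 1 = 0 := le_antisymm hs1 (h0 1)
  have hz : ∀ j, s (j + 1) = 0 := by
    intro j
    induction j with
    | zero => exact hs1'
    | succ k ih => exact le_antisymm ((ha (k + 1)).trans ih.le) (h0 _)
  have h1' : HasSum s (s 0) := by
    refine hasSum_single 0 fun b hb => ?_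
    obtain ⟨j, rfl⟩ := Nat.exists_eq_succ_of_ne_zero hb
    exact hz j
  have hs0 : s 0 = 1 := h1'.unique hsum
  apply hne
  funext i
  cases i with
  | zero => simpa [oneConf] using hs0
  | succ n => simpa [oneConf] using hz n

lemma pw_convex {x a b q₁ q₂ : ℝ} (hx0 : 0 ≤ x) (ha : 0 ≤ a) (hb : 0 ≤ b) (hab : a + b = 1) :
    pw x (a * q₁ + b * q₂ + 1) ≤ a * pw x (q₁ + 1) + b * pw x (q₂ + 1) := by
  rcases eq_or_lt_of_le hx0 with hx | hx
  · simp [pw, ← hx]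
  · rw [pw_of_pos hx, pw_of_pos hx, pw_of_pos hx]
    rw [Real.rpow_def_of_pos hx, Real.rpow_def_of_pos hx, Real.rpow_def_of_pos hx]
    have key := convexOn_exp.2 (Set.mem_univ (Real.log x * (q₁ + 1)))
      (Set.mem_univ (Real.log x * (q₂ + 1))) ha hb hab
    simp only [smul_eq_mul] at key
    have harg : a * (Real.log x * (q₁ + 1)) + b * (Real.log x * (q₂ + 1))
        = Real.log x * (a * q₁ + b * q₂ + 1) := by
      linear_combination Real.log x * hab
    rw [harg] at key
    exact key

def tailT (q : ℝ) (s : ℕ → ℝ) : ℝ :=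
  (∑' i, ENNReal.ofReal (pw (s (i + 1)) (q + 1))).toReal

variable {ν : Measure (ℕ → ℝ)}

lemma meas_sum_tail (q : ℝ) :
    Measurable fun s : ℕ → ℝ => ∑' i, ENNReal.ofReal (pw (s (i + 1)) (q + 1)) :=
  Measurable.ennreal_tsum fun i =>
    ENNReal.measurable_ofReal.comp ((measurable_pw (q + 1)).comp (measurable_pi_apply (i + 1)))

lemma meas_tailT (q : ℝ) : Measurable (tailT q) :=
  (meas_sum_tail q).ennreal_toReal

lemma lfin (hν : IsDislocation ν) {q : ℝ} (hq : pLow ν < (q : EReal)) :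
    ∫⁻ s, ∑' i, ENNReal.ofReal (pw (s (i + 1)) (q + 1)) ∂ν < ⊤ := by
  rw [pLow] at hq
  obtain ⟨x, hxS, hxlt⟩ := sInf_lt_iff.mp hq
  obtain ⟨p, rfl, hp⟩ := hxS
  have hpq : p ≤ q := (EReal.coe_lt_coe_iff.mp hxlt).le
  refine lt_of_le_of_lt (lintegral_mono_ae ?_) hp
  filter_upwards [ae_good hν] with s hs
  exact ENNReal.tsum_le_tsum fun i =>
    ENNReal.ofReal_le_ofReal (pw_mono_exp (hs.nonneg _) (hs.le_one _) (by linarith))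

lemma ae_pack (hν : IsDislocation ν) {q : ℝ} (hq : pLow ν < (q : EReal)) :
    ∀ᵐ s ∂ν, Good s ∧ Summable (fun i => pw (s i) (q + 1)) ∧
      tailT q s = ∑' i, pw (s (i + 1)) (q + 1) ∧
      (1 - ∑' i, pw (s i) (q + 1)) = 1 - pw (s 0) (q + 1) - tailT q s := by
  have hfin := lfin hν hq
  filter_upwards [ae_good hν, ae_lt_top (meas_sum_tail q) hfin.ne] with s hg hlt
  have hnn : ∀ i, 0 ≤ pw (s i) (q + 1) := fun i => pw_nonneg (hg.nonneg i) _
  have htail : Summable fun i => pw (s (i + 1)) (q + 1) := by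
    have h1 : (∑' i, ((Real.toNNReal (pw (s (i + 1)) (q + 1)) : ℝ≥0) : ℝ≥0∞)) ≠ ⊤ := by
      simpa [ENNReal.ofReal] using hlt.ne
    have h2 := ENNReal.tsum_coe_ne_top_iff_summable.mp h1
    have h3 := NNReal.summable_coe.mpr h2
    refine h3.congr fun i => ?_
    exact Real.coe_toNNReal _ (hnn (i + 1))
  have hsum : Summable fun i => pw (s i) (q + 1) := (summable_nat_add_iff 1).mp htail
  have ht : tailT q s = ∑' i, pw (s (i + 1)) (q + 1) := by
    rw [tailT, ← ENNReal.ofReal_tsum_of_nonneg (fun i => hnn (i + 1)) htail]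
    exact ENNReal.toReal_ofReal (tsum_nonneg fun i => hnn (i + 1))
  refine ⟨hg, hsum, ht, ?_⟩
  rw [Summable.tsum_eq_zero_add hsum, ht]; ring

lemma integrable_one_sub (hν : IsDislocation ν) :
    Integrable (fun s : ℕ → ℝ => 1 - s 0) ν := by
  have hm : Measurable fun s : ℕ → ℝ => 1 - s 0 :=
    measurable_const.sub (measurable_pi_apply 0)
  refine ⟨hm.aestronglyMeasurable, ?_⟩
  have hnn : 0 ≤ᵐ[ν] fun s : ℕ → ℝ => 1 - s 0 := by
    filter_upwards [ae_good hν] with s hg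
    have := hg.le_one 0
    simp only [Pi.zero_apply]
    linarith
  rw [hasFiniteIntegral_iff_ofReal hnn]
  exact hν.int_one_sub

lemma integrable_tailT (hν : IsDislocation ν) {q : ℝ} (hq : pLow ν < (q : EReal)) :
    Integrable (tailT q) ν := by
  have hfin := lfin hν hq
  refine ⟨(meas_tailT q).aestronglyMeasurable, ?_⟩
  have hnn : 0 ≤ᵐ[ν] tailT q :=
    Eventually.of_forall fun s => ENNReal.toReal_nonneg
  rw [hasFiniteIntegral_iff_ofReal hnn]
  have heq : ∫⁻ s, ENNReal.ofReal (tailT q s) ∂ν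
      = ∫⁻ s, ∑' i, ENNReal.ofReal (pw (s (i + 1)) (q + 1)) ∂ν := by
    refine lintegral_congr_ae ?_
    filter_upwards [ae_lt_top (meas_sum_tail q) hfin.ne] with s hs
    rw [tailT, ENNReal.ofReal_toReal hs.ne]
  rw [heq]; exact hfin

set_option maxHeartbeats 1000000 in
lemma integrable_F (hν : IsDislocation ν) {q : ℝ} (hq : pLow ν < (q : EReal)) :
    Integrable (fun s => 1 - ∑' i, pw (s i) (q + 1)) ν := by
  set c := max (q + 1) 1 with hc
  have hc1 : (1 : ℝ) ≤ c := le_max_right _ _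
  have hmG : Measurable fun s : ℕ → ℝ => 1 - pw (s 0) (q + 1) - tailT q s :=
    (measurable_const.sub ((measurable_pw (q + 1)).comp (measurable_pi_apply 0))).sub
      (meas_tailT q)
  have haes : AEStronglyMeasurable (fun s => 1 - ∑' i, pw (s i) (q + 1)) ν := by
    refine hmG.aestronglyMeasurable.congr ?_
    filter_upwards [ae_pack hν hq] with s hs
    exact hs.2.2.2.symm
  refine Integrable.mono'
    (g := fun s => c * (1 - s 0) + 2 * tailT q s)
    (((integrable_one_sub hν).const_mul c).add ((integrable_tailT hν hq).const_mul 2))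
    haes ?_
  filter_upwards [ae_pack hν hq] with s hs
  obtain ⟨hg, hsum, ht, hF⟩ := hs
  have hx0 : 0 < s 0 := hg.pos0
  have hx1 : s 0 ≤ 1 := hg.le_one 0
  have hT0 : 0 ≤ tailT q s := ENNReal.toReal_nonneg
  have htail : Summable fun i => pw (s (i + 1)) (q + 1) := (summable_nat_add_iff 1).mpr hsum
  have hTge : pw (s 1) (q + 1) ≤ tailT q s := by
    rw [ht]
    exact Summable.le_tsum htail 0 fun i _ => pw_nonneg (hg.nonneg _) _
  have hcx : 0 ≤ c * (1 - s 0) := mul_nonneg (by linarith) (by linarith)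
  have key : |1 - pw (s 0) (q + 1)| ≤ c * (1 - s 0) + tailT q s := by
    rcases le_or_gt 1 (q + 1) with h1a | h1a
    · have hS0le : pw (s 0) (q + 1) ≤ 1 := by
        rw [pw_of_pos hx0]; exact Real.rpow_le_one hx0.le hx1 (by linarith)
      have hbern : 1 + (q + 1) * (s 0 - 1) ≤ (s 0) ^ (q + 1) := by
        have := one_add_mul_self_le_rpow_one_add (s := s 0 - 1) (by linarith) h1a
        simpa [show (1 : ℝ) + (s 0 - 1) = s 0 by ring] using this
      rw [abs_of_nonneg (by linarith)]
      have hac : q + 1 ≤ c := le_max_left _ _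
      have h2 : 1 - pw (s 0) (q + 1) ≤ (q + 1) * (1 - s 0) := by
        rw [pw_of_pos hx0]; nlinarith
      have h3 : (q + 1) * (1 - s 0) ≤ c * (1 - s 0) :=
        mul_le_mul_of_nonneg_right hac (by linarith)
      linarith
    · rcases le_or_gt 0 (q + 1) with ha0 | ha0
      · have hxa : s 0 ≤ pw (s 0) (q + 1) := by
          rw [pw_of_pos hx0]
          calc s 0 = (s 0) ^ (1 : ℝ) := (Real.rpow_one _).symm
            _ ≤ (s 0) ^ (q + 1) := Real.rpow_le_rpow_of_exponent_ge hx0 hx1 h1a.le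
        have hS0le : pw (s 0) (q + 1) ≤ 1 := by
          rw [pw_of_pos hx0]; exact Real.rpow_le_one hx0.le hx1 ha0
        rw [abs_of_nonneg (by linarith)]
        nlinarith
      · have h1S : 1 ≤ pw (s 0) (q + 1) := by
          rw [pw_of_pos hx0]
          exact Real.one_le_rpow_of_pos_of_le_one_of_nonpos hx0 hx1 ha0.le
        have hS0T : pw (s 0) (q + 1) ≤ pw (s 1) (q + 1) := by
          rw [pw_of_pos hx0, pw_of_pos hg.pos1]
          exact Real.rpow_le_rpow_of_nonpos hg.pos1 (hg.anti 0) ha0.le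
        rw [abs_of_nonpos (by linarith)]
        linarith
  rw [hF, Real.norm_eq_abs]
  calc |1 - pw (s 0) (q + 1) - tailT q s|
      ≤ |1 - pw (s 0) (q + 1)| + |tailT q s| := abs_sub _ _
    _ ≤ (c * (1 - s 0) + tailT q s) + tailT q s := by
        rw [abs_of_nonneg hT0]; linarith
    _ = c * (1 - s 0) + 2 * tailT q s := by ring

end PhiAux

open PhiAux

/-- `Φ` is concave on `(p̲, ∞)`, and strictly increasing there if `ν ≠ 0`. -/
theorem phi_concave_strictMono (ν : Measure (ℕ → ℝ)) (hν : IsDislocation ν) :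
    ConcaveOn ℝ {q : ℝ | pLow ν < (q : EReal)} (Phi ν) ∧
      (ν ≠ 0 → StrictMonoOn (Phi ν) {q : ℝ | pLow ν < (q : EReal)}) := by
  have hconv : Convex ℝ {q : ℝ | pLow ν < (q : EReal)} := by
    intro q₁ h₁ q₂ h₂ a b ha hb hab
    simp only [Set.mem_setOf_eq, smul_eq_mul] at *
    have hmin : min q₁ q₂ ≤ a * q₁ + b * q₂ := by
      rcases le_total q₁ q₂ with h | h
      · rw [min_eq_left h]
        have e : a * q₁ + b * q₂ - q₁ = b * (q₂ - q₁) := by linear_combination q₁ * hab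
        linarith [mul_nonneg hb (sub_nonneg.mpr h)]
      · rw [min_eq_right h]
        have e : a * q₁ + b * q₂ - q₂ = a * (q₁ - q₂) := by linear_combination q₂ * hab
        linarith [mul_nonneg ha (sub_nonneg.mpr h)]
    have hlt : pLow ν < ((min q₁ q₂ : ℝ) : EReal) := by
      rcases le_total q₁ q₂ with h | h
      · rwa [min_eq_left h]
      · rwa [min_eq_right h]
    exact lt_of_lt_of_le hlt (EReal.coe_le_coe_iff.mpr hmin)
  constructor
  · refine ⟨hconv, ?_⟩
    intro q₁ h₁ q₂ h₂ a b ha hb hab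
    have hm : pLow ν < ((a * q₁ + b * q₂ : ℝ) : EReal) := by
      have := hconv h₁ h₂ ha hb hab
      simpa [smul_eq_mul] using this
    simp only [Set.mem_setOf_eq] at h₁ h₂
    have I₁ := integrable_F hν h₁
    have I₂ := integrable_F hν h₂
    have Im := integrable_F hν hm
    simp only [smul_eq_mul, Phi]
    rw [← integral_const_mul, ← integral_const_mul,
      ← integral_add (I₁.const_mul a) (I₂.const_mul b)]
    refine integral_mono_ae ((I₁.const_mul a).add (I₂.const_mul b)) Im ?_
    filter_upwards [ae_pack hν h₁, ae_pack hν h₂] with s hs₁ hs₂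
    obtain ⟨hg, hsum₁, -, -⟩ := hs₁
    obtain ⟨-, hsum₂, -, -⟩ := hs₂
    have hcomb : Summable (fun i => a * pw (s i) (q₁ + 1) + b * pw (s i) (q₂ + 1)) :=
      (hsum₁.mul_left a).add (hsum₂.mul_left b)
    have hsumm : Summable (fun i => pw (s i) (a * q₁ + b * q₂ + 1)) :=
      Summable.of_nonneg_of_le (fun i => pw_nonneg (hg.nonneg i) _)
        (fun i => pw_convex (hg.nonneg i) ha hb hab) hcomb
    have hle : ∑' i, pw (s i) (a * q₁ + b * q₂ + 1)
        ≤ ∑' i, (a * pw (s i) (q₁ + 1) + b * pw (s i) (q₂ + 1)) :=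
      Summable.tsum_le_tsum (fun i => pw_convex (hg.nonneg i) ha hb hab) hsumm hcomb
    rw [Summable.tsum_add (hsum₁.mul_left a) (hsum₂.mul_left b), tsum_mul_left, tsum_mul_left] at hle
    have hexp : a * (1 - ∑' i, pw (s i) (q₁ + 1)) + b * (1 - ∑' i, pw (s i) (q₂ + 1))
        = 1 - (a * ∑' i, pw (s i) (q₁ + 1) + b * ∑' i, pw (s i) (q₂ + 1)) := by
      linear_combination hab
    rw [hexp]
    linarith
  · intro hν0 q₁ h₁ q₂ h₂ h12
    simp only [Set.mem_setOf_eq] at h₁ h₂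
    have I₁ := integrable_F hν h₁
    have I₂ := integrable_F hν h₂
    have hpos : ∀ᵐ s ∂ν, 0 < (1 - ∑' i, pw (s i) (q₂ + 1)) - (1 - ∑' i, pw (s i) (q₁ + 1)) := by
      filter_upwards [ae_pack hν h₁, ae_pack hν h₂] with s hs₁ hs₂
      obtain ⟨hg, hsum₁, -, -⟩ := hs₁
      obtain ⟨-, hsum₂, -, -⟩ := hs₂
      have hlt : ∑' i, pw (s i) (q₂ + 1) < ∑' i, pw (s i) (q₁ + 1) :=
        Summable.tsum_lt_tsum_of_nonneg (fun i => pw_nonneg (hg.nonneg i) _)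
          (fun i => pw_mono_exp (hg.nonneg i) (hg.le_one i) (by linarith))
          (pw_strict hg.pos1 hg.lt_one1 (by linarith)) hsum₁
      linarith
    set g : (ℕ → ℝ) → ℝ :=
      fun s => (1 - ∑' i, pw (s i) (q₂ + 1)) - (1 - ∑' i, pw (s i) (q₁ + 1)) with hgdef
    have hgint : Integrable g ν := I₂.sub I₁
    have key : 0 < ∫ s, g s ∂ν := by
      rw [integral_pos_iff_support_of_nonneg_ae (hpos.mono fun s hs => hs.le) hgint]
      have hz : ν (Function.support g)ᶜ = 0 := by
        have h' : ∀ᵐ s ∂ν, g s ≠ 0 := hpos.mono fun s hs => ne_of_gt hs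
        have := ae_iff.mp h'
        simpa [Function.support, Set.compl_setOf] using this
      rcases eq_or_lt_of_le (zero_le : 0 ≤ ν (Function.support g)) with h0 | h0
      · exfalso
        have huniv : ν Set.univ = 0 := by
          have hsub : (Set.univ : Set (ℕ → ℝ)) ⊆
              Function.support g ∪ (Function.support g)ᶜ := by simp
          have hle : ν Set.univ ≤ 0 :=
            calc ν Set.univ ≤ ν (Function.support g ∪ (Function.support g)ᶜ) :=
                  measure_mono hsub
              _ ≤ ν (Function.support g) + ν (Function.support g)ᶜ := measure_union_le _ _
              _ = 0 := by rw [← h0, hz, add_zero]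
          exact le_antisymm hle zero_le
        exact hν0 (Measure.measure_univ_eq_zero.mp huniv)
      · exact h0
    rw [integral_sub I₂ I₁] at key
    simp only [Phi]
    linarith
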